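/- For any row vector m ∈ ℝ^k with distinct entries, the inverse of the k×k Vandermonde matrix V(m) with entries V(m)_{ij} = (m_j)^i (i = 0,…,k-1; j = 1,…,k) satisfies ‖V(m)⁻¹‖_∞ ≥ max_i ∏_{j≠i} max{1,|m_j|}/|m_i - m_j|, where ‖·‖_∞ is the maximum-absolute-row-sum norm. -/

import Mathlib

open Matrix Finset

/-- Euclidean norm of a finitely-indexed real vector. -/
noncomputable def e2 {n : Type*} [Fintype n] (x : n → ℝ) : ℝ :=
  Real.sqrt (∑ i, x i ^ 2)

/-- The `j`-th largest singular value of a real matrix, via the Courant–Fischer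
max–min characterization: the supremum over `j`-dimensional subspaces of the
infimum of `‖A x‖₂` over unit vectors `x` in the subspace. -/
noncomputable def sval {m' n : Type*} [Fintype m'] [Fintype n] (A : Matrix m' n ℝ) (j : ℕ) : ℝ :=
  ⨆ V : {V : Submodule ℝ (n → ℝ) // Module.finrank ℝ V = j},
    ⨅ x : {x : n → ℝ // x ∈ V.1 ∧ e2 x = 1}, e2 (A.mulVec x.1)

/-- Hadamard extension: rows indexed by subsets `S ⊆ [n]`, entry `(S, j)` equal
to `∏ i ∈ S, m i j`. -/
noncomputable def hadamardExt {n k : ℕ} (m : Matrix (Fin n) (Fin k) ℝ) :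
    Matrix (Finset (Fin n)) (Fin k) ℝ :=
  Matrix.of fun S j => ∏ i ∈ S, m i j

/-- The `L₂ → L₂` operator norm of a real matrix. -/
noncomputable def opN {m' n : Type*} [Fintype m'] [Fintype n] (A : Matrix m' n ℝ) : ℝ :=
  ⨆ x : {x : n → ℝ // e2 x = 1}, e2 (A.mulVec x.1)

open Polynomial in
/-- The inverse of the transposed Vandermonde matrix is given by the
coefficients of the Lagrange basis polynomials. -/
lemma vandermondeT_inv {k : ℕ} (m : Fin k → ℝ) (hm : Function.Injective m) :
    ((Matrix.vandermonde m)ᵀ)⁻¹ =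
      Matrix.of (fun r n : Fin k => (Lagrange.basis Finset.univ m r).coeff n) := by
  apply Matrix.inv_eq_left_inv
  ext r j
  have hinj : Set.InjOn m (Finset.univ : Finset (Fin k)) := Function.Injective.injOn hm
  have hdr : (Lagrange.basis Finset.univ m r).natDegree < k := by
    rw [Lagrange.natDegree_basis hinj (mem_univ r), Finset.card_univ, Fintype.card_fin]
    have : 0 < k := r.pos
    omega
  have heval : (Lagrange.basis Finset.univ m r).eval (m j) =
      ∑ n ∈ Finset.range k, (Lagrange.basis Finset.univ m r).coeff n * m j ^ n :=
    Polynomial.eval_eq_sum_range' hdr (m j)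
  simp only [Matrix.mul_apply, Matrix.of_apply, Matrix.transpose_apply,
    Matrix.vandermonde_apply, Matrix.one_apply]
  rw [Fin.sum_univ_eq_sum_range (fun n => (Lagrange.basis Finset.univ m r).coeff n * m j ^ n),
    ← heval]
  by_cases h : r = j
  · subst h
    simp [Lagrange.eval_basis_self hinj (mem_univ r)]
  · simp [h, Lagrange.eval_basis_of_ne h (mem_univ j)]

lemma max_one_abs_le_norm_I_sub (x : ℝ) : max 1 |x| ≤ ‖Complex.I - (x : ℂ)‖ := by
  have h2 : ‖Complex.I - (x : ℂ)‖ ^ 2 = x ^ 2 + 1 := by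
    rw [Complex.sq_norm]
    simp [Complex.normSq_apply]
    ring
  have hn : 0 ≤ ‖Complex.I - (x : ℂ)‖ := norm_nonneg _
  rcases max_cases 1 |x| with ⟨h, _⟩ | ⟨h, _⟩ <;> rw [h] <;>
    nlinarith [abs_nonneg x, sq_abs x]

open Polynomial in
/-- lower bound on the max-row-sum norm of the inverse of the
Vandermonde matrix V(m)_{ij} = (m_j)^i with distinct nodes:
‖V(m)⁻¹‖_∞ ≥ max_i ∏_{j≠i} max{1,|m_j|}/|m_i - m_j|. -/
theorem stmt11 (k : ℕ) (m : Fin k → ℝ) (hm : Function.Injective m) :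
    ∀ i : Fin k,
      ∏ j ∈ Finset.univ.erase i, max 1 |m j| / |m i - m j| ≤
        ⨆ r : Fin k, ∑ j, |((Matrix.vandermonde m)ᵀ)⁻¹ r j| := by
  intro i
  have hinj : Set.InjOn m (Finset.univ : Finset (Fin k)) := Function.Injective.injOn hm
  set p : Polynomial ℝ := Lagrange.basis Finset.univ m i with hp
  have hdeg : p.natDegree < k := by
    rw [hp, Lagrange.natDegree_basis hinj (mem_univ i), Finset.card_univ, Fintype.card_fin]
    have : 0 < k := i.pos
    omega
  -- the complex evaluation at I
  have haeval : (Polynomial.aeval (Complex.I) p) =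
      ∏ j ∈ Finset.univ.erase i, ((((m i - m j : ℝ) : ℂ))⁻¹ * (Complex.I - (m j : ℂ))) := by
    rw [hp, Lagrange.basis, map_prod]
    refine Finset.prod_congr rfl fun j _ => ?_
    simp [Lagrange.basisDivisor, _root_.map_mul, map_sub]
  -- lower bound on the evaluation
  have hlow : ∏ j ∈ Finset.univ.erase i, max 1 |m j| / |m i - m j| ≤
      ‖(Polynomial.aeval (Complex.I) p : ℂ)‖ := by
    rw [haeval, norm_prod]
    refine Finset.prod_le_prod (fun j _ => by positivity) fun j hj => ?_
    have hne : m i - m j ≠ 0 := by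
      rw [sub_ne_zero]
      exact fun h => (Finset.mem_erase.mp hj).1.symm (hm h)
    rw [norm_mul, norm_inv, Complex.norm_real, Real.norm_eq_abs, div_eq_inv_mul]
    exact mul_le_mul_of_nonneg_left (max_one_abs_le_norm_I_sub (m j))
      (inv_nonneg.mpr (abs_nonneg _))
  -- upper bound by the sum of absolute values of coefficients
  have hup : ‖(Polynomial.aeval (Complex.I) p : ℂ)‖ ≤ ∑ n ∈ Finset.range k, |p.coeff n| := by
    rw [Polynomial.aeval_eq_sum_range' hdeg]
    refine (norm_sum_le _ _).trans (Finset.sum_le_sum fun n _ => ?_)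
    rw [norm_smul, norm_pow, Complex.norm_I, one_pow, mul_one, Real.norm_eq_abs]
  -- identify the coefficient sum with a row sum of the inverse
  have hrow : ∑ n ∈ Finset.range k, |p.coeff n| =
      ∑ j, |((Matrix.vandermonde m)ᵀ)⁻¹ i j| := by
    rw [vandermondeT_inv m hm, ← Fin.sum_univ_eq_sum_range (fun n => |p.coeff n|)]
    rfl
  refine le_trans (hlow.trans (hup.trans_eq hrow)) ?_
  exact le_ciSup (f := fun r : Fin k => ∑ j, |((Matrix.vandermonde m)ᵀ)⁻¹ r j|)
    (Set.Finite.bddAbove (Set.finite_range _)) i
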